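/- arXiv:2208.07086 — 4 statements merged into one kernel-verified Lean document; each statement's English description precedes it below -/
import Mathlib

section
/- The r-Stirling number satisfies the explicit formula S_r(K+r, j+r) counting partitions where the first r elements lie in distinct blocks can be written as Σ_{i=0}^{K} C(K, i) · S(i, j) · r^{K−i}, where S denotes the ordinary Stirling number of the second kind. -/
/-- Stirling numbers of the second kind, via the recurrence
`S(n+1, k+1) = (k+1)·S(n, k+1) + S(n, k)`. -/
def stirling : ℕ → ℕ → ℕ
  | 0, 0 => 1
  | 0, _ + 1 => 0
  | _ + 1, 0 => 0
  | n + 1, k + 1 => (k + 1) * stirling n (k + 1) + stirling n k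

/-- Auxiliary function: `rstirlingAux r m k = S_r(m + r, k)`, defined by the r-Stirling
recurrence with base case `S_r(r, k) = [k = r]`. -/
def rstirlingAux (r : ℕ) : ℕ → ℕ → ℕ
  | 0, k => if k = r then 1 else 0
  | _ + 1, 0 => 0
  | m + 1, k + 1 => (k + 1) * rstirlingAux r m (k + 1) + rstirlingAux r m k

/-- The r-Stirling numbers of the second kind `S_r(n, k)`: the number of partitions of an
`n`-element set into `k` nonempty blocks such that the first `r` elements lie in distinct
blocks, defined here through the standard recurrence. -/
def rstirling (r n k : ℕ) : ℕ := if r ≤ n then rstirlingAux r (n - r) k else 0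

lemma rstirlingAux_eq_zero (r : ℕ) : ∀ m k, k < r → rstirlingAux r m k = 0 := by
  intro m
  induction m with
  | zero =>
    intro k h
    simp only [rstirlingAux]
    rw [if_neg (by omega)]
  | succ m ih =>
    intro k h
    cases k with
    | zero => rfl
    | succ k =>
      show (k + 1) * rstirlingAux r m (k + 1) + rstirlingAux r m k = 0
      rw [ih _ (by omega), ih _ (by omega)]
      simp

lemma stirling_zero_right : ∀ i, stirling i 0 = if i = 0 then 1 else 0 := by
  intro i; cases i <;> simp [stirling]

lemma shift_sum (K j r : ℕ) :
    ∑ i ∈ Finset.range (K + 1), K.choose (i + 1) * stirling (i + 1) (j + 1) * r ^ (K - i)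
      = r * ∑ i ∈ Finset.range (K + 1), K.choose i * stirling i (j + 1) * r ^ (K - i) := by
  rw [Finset.mul_sum, Finset.sum_range_succ, Finset.sum_range_succ']
  simp only [Nat.choose_succ_self, zero_mul, add_zero]
  have h0 : stirling 0 (j + 1) = 0 := rfl
  rw [h0]
  simp only [mul_zero, zero_mul, add_zero]
  apply Finset.sum_congr rfl
  intro i hi
  simp only [Finset.mem_range] at hi
  rw [show K - i = (K - (i + 1)) + 1 from by omega, pow_succ]
  ring

lemma key (r : ℕ) : ∀ K j, rstirlingAux r K (j + r) =
    ∑ i ∈ Finset.range (K + 1), K.choose i * stirling i j * r ^ (K - i) := by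
  intro K
  induction K with
  | zero =>
    intro j
    cases j with
    | zero => simp [rstirlingAux, stirling]
    | succ j =>
      show (if j + 1 + r = r then 1 else 0) = _
      rw [if_neg (by omega)]
      simp [stirling]
  | succ K ih =>
    intro j
    cases j with
    | zero =>
      cases r with
      | zero =>
        show (0 : ℕ) = _
        symm
        apply Finset.sum_eq_zero
        intro i hi
        simp only [Finset.mem_range] at hi
        rcases eq_or_lt_of_le (Nat.lt_succ_iff.mp hi) with h | h
        · rw [h, stirling_zero_right, if_neg (Nat.succ_ne_zero K)]
          simp
        · rw [show K + 1 - i = (K - i) + 1 from by omega, pow_succ]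
          simp
      | succ s =>
        rw [Nat.zero_add]
        show (s + 1) * rstirlingAux (s + 1) K (s + 1) + rstirlingAux (s + 1) K s = _
        rw [rstirlingAux_eq_zero (s + 1) K s (by omega), add_zero]
        have h := ih 0
        rw [Nat.zero_add] at h
        rw [h]
        rw [Finset.mul_sum]
        rw [Finset.sum_range_succ', Finset.sum_range_succ']
        simp only [stirling_zero_right, if_neg (Nat.succ_ne_zero _), if_pos rfl,
          mul_zero, zero_mul, zero_add, Nat.choose_zero_right, mul_one, one_mul,
          Nat.sub_zero]
        simp only [Finset.sum_const_zero, zero_add]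
        simp only [if_pos trivial, one_mul, mul_one]
        ring
    | succ j =>
      have hrec : rstirlingAux r (K + 1) (j + 1 + r)
          = (j + r + 1) * rstirlingAux r K (j + 1 + r) + rstirlingAux r K (j + r) := by
        rw [show j + 1 + r = (j + r) + 1 from by omega]
        rfl
      rw [hrec, ih (j + 1), ih j]
      rw [Finset.sum_range_succ' (fun i => (K + 1).choose i * stirling i (j + 1) * r ^ (K + 1 - i))]
      have h0 : stirling 0 (j + 1) = 0 := rfl
      rw [h0]
      simp only [mul_zero, zero_mul, add_zero, Nat.succ_sub_succ]
      have hsplit : ∀ i ∈ Finset.range (K + 1),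
          (K + 1).choose (i + 1) * stirling (i + 1) (j + 1) * r ^ (K - i)
            = K.choose i * stirling (i + 1) (j + 1) * r ^ (K - i)
              + K.choose (i + 1) * stirling (i + 1) (j + 1) * r ^ (K - i) := by
        intro i _
        rw [Nat.choose_succ_succ, add_mul, add_mul]
      rw [Finset.sum_congr rfl hsplit, Finset.sum_add_distrib, shift_sum]
      have hA : ∑ i ∈ Finset.range (K + 1), K.choose i * stirling (i + 1) (j + 1) * r ^ (K - i)
          = (j + 1) * (∑ i ∈ Finset.range (K + 1), K.choose i * stirling i (j + 1) * r ^ (K - i))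
            + ∑ i ∈ Finset.range (K + 1), K.choose i * stirling i j * r ^ (K - i) := by
        rw [Finset.mul_sum, ← Finset.sum_add_distrib]
        apply Finset.sum_congr rfl
        intro i _
        show K.choose i * ((j + 1) * stirling i (j + 1) + stirling i j) * r ^ (K - i) = _
        ring
      rw [hA]
      ring

/-- The explicit formula for the r-Stirling numbers:
`S_r(K + r, j + r) = Σ_{i=0}^{K} C(K, i) · S(i, j) · r^{K−i}`. -/
theorem rstirling_explicit_formula (K j r : ℕ) :
    rstirling r (K + r) (j + r) =
      ∑ i ∈ Finset.range (K + 1), K.choose i * stirling i j * r ^ (K - i) := by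
  rw [rstirling, if_pos (Nat.le_add_left r K), Nat.add_sub_cancel, key]
end

section
/- Under the beta-binomial partition prior with α = 1, as β → ∞ the probability of the one-block partition converges to 1, and as β → 0⁺ the probability of the all-singletons partition converges to 1. -/
/-- The real Beta function `B(a, b) = Γ(a)Γ(b)/Γ(a + b)`. -/
noncomputable def rBeta (a b : ℝ) : ℝ := Real.Gamma a * Real.Gamma b / Real.Gamma (a + b)

/-- The (adjusted) beta-binomial prior density over partitions of `{1, …, K}`:
`π(ρ | K, α, β) = C(K−1, |ρ|−1) · B(|ρ|−1+α, K−|ρ|+β) / (B(α, β) · S(K, |ρ|))`. -/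
noncomputable def bbDensity (K : ℕ) (α β : ℝ)
    (ρ : Finpartition (Finset.univ : Finset (Fin K))) : ℝ :=
  ((K - 1).choose (ρ.parts.card - 1) : ℝ) *
    rBeta ((ρ.parts.card : ℝ) - 1 + α) ((K : ℝ) - ρ.parts.card + β) /
    (rBeta α β * (stirling K ρ.parts.card : ℝ))

lemma stirling_eq_zero_of_lt : ∀ n k, n < k → stirling n k = 0
  | 0, _ + 1, _ => rfl
  | n + 1, k + 1, h => by
    have h1 : n < k + 1 := by omega
    have h2 : n < k := by omega
    simp [stirling, stirling_eq_zero_of_lt n (k + 1) h1, stirling_eq_zero_of_lt n k h2]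

lemma stirling_self : ∀ n, stirling n n = 1
  | 0 => rfl
  | n + 1 => by
    simp [stirling, stirling_eq_zero_of_lt n (n + 1) (Nat.lt_succ_self n), stirling_self n]

lemma stirling_one : ∀ n, stirling (n + 1) 1 = 1
  | 0 => rfl
  | n + 1 => by
    show 1 * stirling (n + 1) 1 + stirling (n + 1) 0 = 1
    rw [stirling_one n]
    rfl

lemma rBeta_one_left (x : ℝ) (hx : 0 < x) : rBeta 1 x = 1 / x := by
  have hΓ : Real.Gamma x ≠ 0 := (Real.Gamma_pos_of_pos hx).ne'
  rw [rBeta, Real.Gamma_one, add_comm, Real.Gamma_add_one hx.ne']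
  field_simp

lemma one_ne_neg_natCast : ∀ m : ℕ, (1 : ℝ) ≠ -m := by
  intro m h
  have := Nat.cast_nonneg (α := ℝ) m
  linarith

/-- Under the beta-binomial partition prior with `α = 1`, as `β → ∞` the
probability of the one-block partition converges to `1`, and as `β → 0⁺` the probability of
the all-singletons partition converges to `1`. -/
theorem bbDensity_limits (K : ℕ) (hK : 2 ≤ K)
    (ρnull ρfull : Finpartition (Finset.univ : Finset (Fin K)))
    (hnull : ρnull.parts = {(Finset.univ : Finset (Fin K))})
    (hfull : ρfull.parts.card = K) :
    Filter.Tendsto (fun β : ℝ => bbDensity K 1 β ρnull) Filter.atTop (nhds 1) ∧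
    Filter.Tendsto (fun β : ℝ => bbDensity K 1 β ρfull)
        (nhdsWithin 0 (Set.Ioi 0)) (nhds 1) := by
  have hKpos : (0 : ℝ) < K := by positivity
  have hK1 : (1 : ℝ) ≤ (K : ℝ) - 1 := by
    have : (2 : ℝ) ≤ (K : ℝ) := by exact_mod_cast hK
    linarith
  have hKnat : K - 1 + 1 = K := by omega
  constructor
  · -- β → ∞, one-block partition
    have hcard : ρnull.parts.card = 1 := by rw [hnull]; exact Finset.card_singleton _
    have hst : stirling K 1 = 1 := by rw [← hKnat]; exact stirling_one (K - 1)
    have heq : ∀ β : ℝ, 0 < β →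
        bbDensity K 1 β ρnull = β / ((K : ℝ) - 1 + β) := by
      intro β hβ
      have hpos : 0 < (K : ℝ) - 1 + β := by linarith
      rw [bbDensity, hcard, hst]
      push_cast
      rw [rBeta_one_left β hβ]
      have h1 : (1 : ℝ) - 1 + 1 = 1 := by ring
      rw [h1, rBeta_one_left _ hpos]
      field_simp
      simp
    have hlim : Filter.Tendsto (fun β : ℝ => β / ((K : ℝ) - 1 + β))
        Filter.atTop (nhds 1) := by
      have h0 : Filter.Tendsto (fun β : ℝ => ((K : ℝ) - 1) / β) Filter.atTop (nhds 0) :=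
        Filter.Tendsto.div_atTop tendsto_const_nhds Filter.tendsto_id
      have h1 : Filter.Tendsto (fun β : ℝ => ((K : ℝ) - 1) / β + 1) Filter.atTop (nhds 1) := by
        simpa using h0.add (tendsto_const_nhds (x := (1 : ℝ)))
      have h2 : Filter.Tendsto (fun β : ℝ => (((K : ℝ) - 1) / β + 1)⁻¹)
          Filter.atTop (nhds 1) := by
        simpa using h1.inv₀ one_ne_zero
      refine h2.congr' ?_
      filter_upwards [Filter.Ioi_mem_atTop 0] with β hβ
      have hβ' : (0 : ℝ) < β := hβ
      have hpos : 0 < (K : ℝ) - 1 + β := by linarith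
      have hd : 0 < ((K : ℝ) - 1) / β + 1 := by
        have : 0 ≤ ((K : ℝ) - 1) / β := div_nonneg (by linarith) hβ'.le
        linarith
      rw [eq_comm, inv_eq_one_div, div_eq_div_iff hpos.ne' hd.ne']
      field_simp
    refine hlim.congr' ?_
    filter_upwards [Filter.Ioi_mem_atTop (0 : ℝ)] with β hβ
    exact (heq β hβ).symm
  · -- β → 0⁺, all-singletons partition
    have hst : stirling K K = 1 := stirling_self K
    have heq : ∀ β : ℝ, 0 < β →
        bbDensity K 1 β ρfull =
          Real.Gamma K * Real.Gamma (β + 1) / Real.Gamma ((K : ℝ) + β) := by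
      intro β hβ
      rw [bbDensity, hfull, hst, Nat.choose_self]
      have ha : (K : ℝ) - 1 + 1 = (K : ℝ) := by ring
      have hb : (K : ℝ) - (K : ℝ) + β = β := by ring
      rw [ha, hb, rBeta_one_left β hβ, rBeta, Real.Gamma_add_one hβ.ne']
      push_cast
      have hΓβ : Real.Gamma β ≠ 0 := (Real.Gamma_pos_of_pos hβ).ne'
      field_simp
    have hcont : ContinuousAt
        (fun β : ℝ => Real.Gamma K * Real.Gamma (β + 1) / Real.Gamma ((K : ℝ) + β)) 0 := by
      have hc1 : ContinuousAt (fun β : ℝ => Real.Gamma (β + 1)) 0 := by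
        have hd : ContinuousAt Real.Gamma ((0 : ℝ) + 1) := by
          rw [zero_add]
          exact (Real.differentiableAt_Gamma one_ne_neg_natCast).continuousAt
        have h' : ContinuousAt (fun β : ℝ => β + 1) 0 := by fun_prop
        exact ContinuousAt.comp (f := fun β : ℝ => β + 1) hd h'
      have hc2 : ContinuousAt (fun β : ℝ => Real.Gamma ((K : ℝ) + β)) 0 := by
        have hd : ContinuousAt Real.Gamma ((K : ℝ) + 0) := by
          refine (Real.differentiableAt_Gamma ?_).continuousAt
          intro m h
          have := Nat.cast_nonneg (α := ℝ) m
          linarith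
        have h' : ContinuousAt (fun β : ℝ => (K : ℝ) + β) 0 := by fun_prop
        exact ContinuousAt.comp (f := fun β : ℝ => (K : ℝ) + β) hd h'
      have hne : Real.Gamma ((K : ℝ) + 0) ≠ 0 := by
        refine (Real.Gamma_pos_of_pos ?_).ne'
        linarith
      exact ((continuousAt_const.mul hc1).div hc2 (by simpa using hne))
    have hval : Real.Gamma (K : ℝ) * Real.Gamma ((0 : ℝ) + 1) / Real.Gamma ((K : ℝ) + 0) = 1 := by
      rw [zero_add, Real.Gamma_one, add_zero, mul_one]
      exact div_self (Real.Gamma_pos_of_pos hKpos).ne'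
    have hlim : Filter.Tendsto
        (fun β : ℝ => Real.Gamma K * Real.Gamma (β + 1) / Real.Gamma ((K : ℝ) + β))
        (nhdsWithin 0 (Set.Ioi 0)) (nhds 1) := by
      have := hcont.tendsto.mono_left (nhdsWithin_le_nhds (s := Set.Ioi (0 : ℝ)))
      simpa [Real.Gamma_one, div_self (Real.Gamma_pos_of_pos hKpos).ne'] using this
    refine hlim.congr' ?_
    filter_upwards [self_mem_nhdsWithin] with β hβ
    exact (heq β hβ).symm
end

section
/- The sequence j ↦ S(K+1, j)/S(K, j) − j is nondecreasing in j for 1 ≤ j ≤ K; equivalently, S(K+1, j+1)/S(K, j+1) − (j+1) ≥ S(K+1, j)/S(K, j) − j. -/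
lemma stirling_pos : ∀ (n k : ℕ), k ≤ n → 0 < stirling (n + 1) (k + 1) := by
  intro n
  induction n with
  | zero =>
    intro k hk
    interval_cases k
    simp [stirling]
  | succ n ih =>
    intro k hk
    match k with
    | 0 =>
      show 0 < 1 * stirling (n + 1) 1 + stirling (n + 1) 0
      have h0 : 0 < stirling (n + 1) 1 := ih 0 (Nat.zero_le n)
      omega
    | m + 1 =>
      show 0 < (m + 2) * stirling (n + 1) (m + 2) + stirling (n + 1) (m + 1)
      have h0 := ih m (by omega)
      omega

/-- Generalized log-concavity / decreasing-ratio property: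
`S(n,k)·S(n,l+2) ≤ S(n,k+1)·S(n,l+1)` whenever `k ≤ l`. -/
lemma stirling_lc : ∀ (n k l : ℕ), k ≤ l →
    stirling n k * stirling n (l + 2) ≤ stirling n (k + 1) * stirling n (l + 1) := by
  intro n
  induction n with
  | zero =>
    intro k l _
    simp [stirling]
  | succ n ih =>
    intro k l hkl
    match k with
    | 0 => simp [stirling]
    | m + 1 =>
      have hml : m + 1 ≤ l := hkl
      have e1 : stirling (n + 1) (m + 1)
          = (m + 1) * stirling n (m + 1) + stirling n m := rfl
      have e2 : stirling (n + 1) (l + 2)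
          = (l + 2) * stirling n (l + 2) + stirling n (l + 1) := rfl
      have e3 : stirling (n + 1) (m + 2)
          = (m + 2) * stirling n (m + 2) + stirling n (m + 1) := rfl
      have e4 : stirling (n + 1) (l + 1)
          = (l + 1) * stirling n (l + 1) + stirling n l := rfl
      have F1 : stirling n (m + 1) * stirling n (l + 2)
          ≤ stirling n (m + 2) * stirling n (l + 1) := ih (m + 1) l hml
      have F2 : stirling n m * stirling n (l + 2)
          ≤ stirling n (m + 1) * stirling n (l + 1) := ih m l (by omega)
      have F3 : stirling n m * stirling n (l + 1)
          ≤ stirling n (m + 1) * stirling n l := by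
        obtain ⟨q, rfl⟩ : ∃ q, l = q + 1 := ⟨l - 1, by omega⟩
        exact ih m q (by omega)
      have F4 : stirling n (m + 1) * stirling n (l + 1)
          ≤ stirling n (m + 2) * stirling n l := by
        rcases eq_or_lt_of_le hml with h | h
        · rw [← h]; ring_nf; exact le_refl _
        · obtain ⟨p, rfl⟩ : ∃ p, l = (m + 1 + p) + 1 := ⟨l - m - 2, by omega⟩
          exact ih (m + 1) (m + 1 + p) (by omega)
      rw [e1, e2, e3, e4]
      have C1 : (m + 1) * (l + 2) ≤ (m + 2) * (l + 1) := by nlinarith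
      have H1 : (m + 1) * (l + 2) * (stirling n (m + 1) * stirling n (l + 2))
          ≤ (m + 2) * (l + 1) * (stirling n (m + 2) * stirling n (l + 1)) :=
        Nat.mul_le_mul C1 F1
      have H2 : (l + 2) * (stirling n m * stirling n (l + 2))
          ≤ (l + 2) * (stirling n (m + 1) * stirling n (l + 1)) :=
        Nat.mul_le_mul_left _ F2
      have H4 : (m + 2) * (stirling n (m + 1) * stirling n (l + 1))
          ≤ (m + 2) * (stirling n (m + 2) * stirling n l) :=
        Nat.mul_le_mul_left _ F4
      nlinarith [H1, H2, F3, H4]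

/-- The sequence `j ↦ S(K+1, j)/S(K, j) − j` is nondecreasing in `j`:
`S(K+1, j+1)/S(K, j+1) − (j+1) ≥ S(K+1, j)/S(K, j) − j` for `1 ≤ j ≤ K − 1`
(property 2 of Berg, 1975). -/
theorem stirling_ratio_monotone (K j : ℕ) (h1 : 1 ≤ j) (h2 : j ≤ K - 1) :
    (stirling (K + 1) j : ℝ) / (stirling K j : ℝ) - (j : ℝ) ≤
      (stirling (K + 1) (j + 1) : ℝ) / (stirling K (j + 1) : ℝ) - ((j : ℝ) + 1) := by
  obtain ⟨m, rfl⟩ : ∃ m, j = m + 1 := ⟨j - 1, by omega⟩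
  have hK : m + 2 ≤ K := by omega
  obtain ⟨n, rfl⟩ : ∃ n, K = n + 1 := ⟨K - 1, by omega⟩
  have hb : 0 < stirling (n + 1) (m + 1) := stirling_pos n m (by omega)
  have hc : 0 < stirling (n + 1) (m + 2) := stirling_pos n (m + 1) (by omega)
  have e1 : stirling (n + 2) (m + 1)
      = (m + 1) * stirling (n + 1) (m + 1) + stirling (n + 1) m := rfl
  have e2 : stirling (n + 2) (m + 2)
      = (m + 2) * stirling (n + 1) (m + 2) + stirling (n + 1) (m + 1) := rfl
  have hbR : (0 : ℝ) < (stirling (n + 1) (m + 1) : ℝ) := by exact_mod_cast hb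
  have hcR : (0 : ℝ) < (stirling (n + 1) (m + 2) : ℝ) := by exact_mod_cast hc
  have key : (stirling (n + 1) m : ℝ) * (stirling (n + 1) (m + 2) : ℝ)
      ≤ (stirling (n + 1) (m + 1) : ℝ) * (stirling (n + 1) (m + 1) : ℝ) := by
    exact_mod_cast stirling_lc (n + 1) m m le_rfl
  set a : ℝ := (stirling (n + 1) m : ℝ)
  set b : ℝ := (stirling (n + 1) (m + 1) : ℝ)
  set c : ℝ := (stirling (n + 1) (m + 2) : ℝ)
  have haR : (0 : ℝ) ≤ a := by positivity
  have hratio : a / b ≤ b / c := by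
    rw [div_le_div_iff₀ hbR hcR]
    exact key
  have eq1 : (stirling (n + 2) (m + 1) : ℝ) = (m + 1) * b + a := by
    rw [e1]; push_cast; ring
  have eq2 : (stirling (n + 2) (m + 2) : ℝ) = (m + 2) * c + b := by
    rw [e2]; push_cast; ring
  rw [eq1, eq2]
  push_cast
  rw [div_le_div_iff₀ hbR hcR] at hratio
  rw [sub_le_sub_iff]
  rw [div_add' _ _ _ hbR.ne', div_add' _ _ _ hcR.ne', div_le_div_iff₀ hbR hcR]
  nlinarith [hratio, hbR, hcR]
end

section
/- With α = 1 and β ≥ C(K, 2), the beta-binomial prior density over partitions of {1,…,K} is nonincreasing in partition size: for any partitions ρ, q with |q| = |ρ| + 1, π(ρ | K, 1, β) ≥ π(q | K, 1, β); if β > C(K, 2) the inequality is strict. -/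
lemma stirling_pos' (n k : ℕ) (h1 : 1 ≤ k) (h2 : k ≤ n) : 0 < stirling n k := by
  induction n generalizing k with
  | zero => omega
  | succ n ih =>
    obtain ⟨k, rfl⟩ : ∃ j, k = j + 1 := ⟨k - 1, by omega⟩
    show 0 < (k + 1) * stirling n (k + 1) + stirling n k
    rcases Nat.eq_zero_or_pos k with rfl | hk
    · rcases Nat.eq_zero_or_pos n with rfl | hn
      · decide
      · have := ih 1 le_rfl hn
        simp only [Nat.zero_add, one_mul]
        omega
    · have := ih k hk (by omega)
      omega

lemma stirling_key' (n : ℕ) : ∀ m : ℕ,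
    2 * ((n - m) * stirling n m) ≤ (m + 1) * m * stirling n (m + 1) := by
  induction n with
  | zero => intro m; cases m <;> simp [stirling]
  | succ n ih =>
    intro m
    rcases m with _ | j
    · simp [stirling]
    by_cases hc : n + 1 ≤ j + 1
    · have h0 : n + 1 - (j + 1) = 0 := by omega
      simp [h0]
    · obtain ⟨t, rfl⟩ : ∃ t, n = j + 1 + t := ⟨n - (j + 1), by omega⟩
      have h1 := ih j
      have h2 := ih (j + 1)
      have e1 : j + 1 + t - j = t + 1 := by omega
      have e2 : j + 1 + t - (j + 1) = t := by omega
      have e3 : j + 1 + t + 1 - (j + 1) = t + 1 := by omega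
      rw [e1] at h1; rw [e2] at h2
      show 2 * ((j + 1 + t + 1 - (j + 1)) *
          ((j + 1) * stirling (j + 1 + t) (j + 1) + stirling (j + 1 + t) j)) ≤
        (j + 1 + 1) * (j + 1) *
          ((j + 1 + 1) * stirling (j + 1 + t) (j + 1 + 1) + stirling (j + 1 + t) (j + 1))
      rw [e3]
      nlinarith [Nat.mul_le_mul_left (j + 2) h2, h1,
        Nat.zero_le (stirling (j + 1 + t) (j + 1))]

lemma rBeta_pos' {a b : ℝ} (ha : 0 < a) (hb : 0 < b) : 0 < rBeta a b :=
  div_pos (mul_pos (Real.Gamma_pos_of_pos ha) (Real.Gamma_pos_of_pos hb))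
    (Real.Gamma_pos_of_pos (by linarith))

lemma bb_eq' (K n : ℕ) (β : ℝ) (ρ : Finpartition (Finset.univ : Finset (Fin K)))
    (hn : ρ.parts.card = n) :
    bbDensity K 1 β ρ = ((K - 1).choose (n - 1) : ℝ) *
      (Real.Gamma (n : ℝ) * Real.Gamma ((K : ℝ) - n + β) / Real.Gamma ((K : ℝ) + β)) /
      (rBeta 1 β * (stirling K n : ℝ)) := by
  rw [bbDensity, hn]
  have e1 : (n : ℝ) - 1 + 1 = (n : ℝ) := by ring
  rw [e1, rBeta]
  have e2 : (n : ℝ) + ((K : ℝ) - n + β) = (K : ℝ) + β := by ring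
  rw [e2]


set_option maxHeartbeats 400000 in
/-- With `α = 1` and `β ≥ C(K, 2)`, the beta-binomial prior density over
partitions of `{1, …, K}` is nonincreasing in partition size: for partitions `ρ, q` with
`|q| = |ρ| + 1` one has `π(q) ≤ π(ρ)`; if `β > C(K, 2)` the inequality is strict. -/
theorem bbDensity_decreasing (K : ℕ) (hK : 2 ≤ K) (β : ℝ)
    (hβ : (K.choose 2 : ℝ) ≤ β)
    (ρ q : Finpartition (Finset.univ : Finset (Fin K)))
    (hq : q.parts.card = ρ.parts.card + 1) :
    bbDensity K 1 β q ≤ bbDensity K 1 β ρ ∧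
      ((K.choose 2 : ℝ) < β → bbDensity K 1 β q < bbDensity K 1 β ρ) := by
  set m := ρ.parts.card with hm
  have hne : (Finset.univ : Finset (Fin K)) ≠ ⊥ := by
    have hne' : (Finset.univ : Finset (Fin K)).Nonempty :=
      ⟨⟨0, by omega⟩, Finset.mem_univ _⟩
    simpa using hne'.ne_empty
  have hm1 : 1 ≤ m := Finset.card_pos.mpr (ρ.parts_nonempty hne)
  have hmK : m + 1 ≤ K := by
    have h := q.card_parts_le_card
    rw [hq] at h
    simpa using h
  have hKch : (1 : ℝ) ≤ (K.choose 2 : ℝ) := by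
    exact_mod_cast Nat.one_le_iff_ne_zero.mpr (Nat.choose_pos hK).ne'
  have hβ1 : (1 : ℝ) ≤ β := le_trans hKch hβ
  have hmR : (m : ℝ) + 1 ≤ (K : ℝ) := by exact_mod_cast hmK
  have hm0 : (0 : ℝ) < (m : ℝ) := by exact_mod_cast hm1
  have hx : (0 : ℝ) < (K : ℝ) - m - 1 + β := by linarith
  set A := Real.Gamma (m : ℝ) with hA
  set B := Real.Gamma ((K : ℝ) - m - 1 + β) with hB
  set C0 := Real.Gamma ((K : ℝ) + β) with hC0
  set Bb := rBeta 1 β with hBb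
  set S0 := (stirling K m : ℝ) with hS0
  set S1 := (stirling K (m + 1) : ℝ) with hS1
  have hApos : 0 < A := Real.Gamma_pos_of_pos hm0
  have hBpos : 0 < B := Real.Gamma_pos_of_pos hx
  have hC0pos : 0 < C0 := Real.Gamma_pos_of_pos (by linarith)
  have hBbpos : 0 < Bb := rBeta_pos' one_pos (by linarith)
  have hS0pos : 0 < S0 := by
    rw [hS0]; exact_mod_cast stirling_pos' K m hm1 (by omega)
  have hS1pos : 0 < S1 := by
    rw [hS1]; exact_mod_cast stirling_pos' K (m + 1) (by omega) hmK
  set c := ((K - 1).choose (m - 1) : ℝ) with hc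
  have hcpos : (0 : ℝ) < c := by
    rw [hc]
    exact_mod_cast Nat.choose_pos (by omega : m - 1 ≤ K - 1)
  set W := A * B / (C0 * Bb * S0 * S1) with hW
  have hWpos : 0 < W := by positivity
  have g1 : Real.Gamma (((m + 1 : ℕ) : ℝ)) = (m : ℝ) * A := by
    push_cast
    rw [Real.Gamma_add_one hm0.ne']
  have g2 : (K : ℝ) - ((m + 1 : ℕ) : ℝ) + β = (K : ℝ) - m - 1 + β := by push_cast; ring
  have g3 : Real.Gamma ((K : ℝ) - m + β) = ((K : ℝ) - m - 1 + β) * B := by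
    have e : (K : ℝ) - m + β = ((K : ℝ) - m - 1 + β) + 1 := by ring
    rw [e, Real.Gamma_add_one hx.ne', hB]
  have hch : (((K - 1).choose m : ℕ) : ℝ) * m = c * ((K : ℝ) - m) := by
    have h := Nat.choose_succ_right_eq (K - 1) (m - 1)
    rw [show m - 1 + 1 = m from by omega, show K - 1 - (m - 1) = K - m from by omega] at h
    calc (((K - 1).choose m : ℕ) : ℝ) * m = (((K - 1).choose m * m : ℕ) : ℝ) := by push_cast; ring
      _ = (((K - 1).choose (m - 1) * (K - m) : ℕ) : ℝ) := by rw [h]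
      _ = c * ((K : ℝ) - m) := by
          push_cast [Nat.cast_sub (by omega : m ≤ K)]; ring
  have Eρ : bbDensity K 1 β ρ = (c * (((K : ℝ) - m - 1 + β) * S1)) * W := by
    rw [bb_eq' K m β ρ rfl, g3, hW]
    field_simp
    simp only [← hc, ← hA, ← hC0, ← hBb, ← hS0]
    field_simp
  have Eq : bbDensity K 1 β q = (c * (((K : ℝ) - m) * S0)) * W := by
    rw [bb_eq' K (m + 1) β q hq]
    simp only [Nat.add_sub_cancel]
    rw [g1, g2]
    calc (((K - 1).choose m : ℕ) : ℝ) * ((m : ℝ) * A * B / C0) / (Bb * S1)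
        = ((((K - 1).choose m : ℕ) : ℝ) * (m : ℝ)) * (A * B / (C0 * Bb * S1)) := by ring
      _ = (c * ((K : ℝ) - m)) * (A * B / (C0 * Bb * S1)) := by rw [hch]
      _ = (c * (((K : ℝ) - m) * S0)) * W := by rw [hW]; field_simp
  have h2c : 2 * K.choose 2 = K * (K - 1) := by
    rw [Nat.choose_two_right]
    refine Nat.mul_div_cancel' ?_
    have h := Nat.even_mul_succ_self (K - 1)
    rw [show K - 1 + 1 = K from by omega] at h
    have := h.two_dvd
    rwa [Nat.mul_comm] at this
  have hstN : 2 * ((K - m) * stirling K m) ≤ (2 * K.choose 2) * stirling K (m + 1) := by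
    refine le_trans (stirling_key' K m) ?_
    rw [h2c]
    exact Nat.mul_le_mul_right _ (Nat.mul_le_mul (by omega) (by omega))
  have hstR : 2 * (((K : ℝ) - m) * S0) ≤ 2 * (K.choose 2 : ℝ) * S1 := by
    have h : ((2 * ((K - m) * stirling K m) : ℕ) : ℝ) ≤
        (((2 * K.choose 2) * stirling K (m + 1) : ℕ) : ℝ) := by exact_mod_cast hstN
    push_cast [Nat.cast_sub (by omega : m ≤ K)] at h
    rw [hS0, hS1]
    linarith
  have key : ((K : ℝ) - m) * S0 ≤ ((K : ℝ) - m - 1 + β) * S1 := by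
    nlinarith [mul_nonneg (by linarith : (0 : ℝ) ≤ β - (K.choose 2 : ℝ)) hS1pos.le,
      mul_nonneg (by linarith : (0 : ℝ) ≤ (K : ℝ) - m - 1) hS1pos.le]
  constructor
  · rw [Eρ, Eq]
    have h : c * (((K : ℝ) - m) * S0) ≤ c * (((K : ℝ) - m - 1 + β) * S1) :=
      mul_le_mul_of_nonneg_left key hcpos.le
    exact mul_le_mul_of_nonneg_right h hWpos.le
  · intro hlt
    have keys : ((K : ℝ) - m) * S0 < ((K : ℝ) - m - 1 + β) * S1 := by
      nlinarith [mul_pos (by linarith : (0 : ℝ) < β - (K.choose 2 : ℝ)) hS1pos,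
        mul_nonneg (by linarith : (0 : ℝ) ≤ (K : ℝ) - m - 1) hS1pos.le]
    rw [Eρ, Eq]
    exact mul_lt_mul_of_pos_right (mul_lt_mul_of_pos_left keys hcpos) hWpos
end
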